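/- Let p and q be probability distributions over a random variable taking values in [0,1], with means p̄ and q̄. Then |p̄ − q̄| ≤ 8 √(Var(p) · D_H²(p,q)) + 20 D_H²(p,q), where D_H² is the squared Hellinger distance and Var(p) is the variance under p. -/

import Mathlib

open MeasureTheory Real

/-- Cauchy–Schwarz for integrals of real functions. -/
lemma cs_integral {μ : Measure ℝ} {f g : ℝ → ℝ}
    (hfm : AEStronglyMeasurable f μ) (hgm : AEStronglyMeasurable g μ)
    (hf2 : Integrable (fun x => f x ^ 2) μ) (hg2 : Integrable (fun x => g x ^ 2) μ) :
    |∫ x, f x * g x ∂μ| ≤ Real.sqrt (∫ x, f x ^ 2 ∂μ) * Real.sqrt (∫ x, g x ^ 2 ∂μ) := by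
  have hmf : MemLp f 2 μ := (memLp_two_iff_integrable_sq hfm).2 hf2
  have hmg : MemLp g 2 μ := (memLp_two_iff_integrable_sq hgm).2 hg2
  have hconj : (2 : ℝ).HolderConjugate 2 := Real.holderConjugate_iff.mpr ⟨by norm_num, by norm_num⟩
  have h2 : (ENNReal.ofReal (2 : ℝ)) = 2 := by norm_num
  have hH := integral_mul_le_Lp_mul_Lq_of_nonneg (μ := μ) hconj
      (f := fun x => |f x|) (g := fun x => |g x|)
      (Filter.Eventually.of_forall fun x => abs_nonneg _)
      (Filter.Eventually.of_forall fun x => abs_nonneg _)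
      (by simpa [h2, Real.norm_eq_abs] using hmf.norm)
      (by simpa [h2, Real.norm_eq_abs] using hmg.norm)
  have habs : ∀ y : ℝ, |y| ^ (2 : ℝ) = y ^ 2 := fun y => by
    rw [show ((2:ℝ) = ((2:ℕ):ℝ)) by norm_num, Real.rpow_natCast, sq_abs]
  have e1 : ∫ x, |f x| ^ (2 : ℝ) ∂μ = ∫ x, f x ^ 2 ∂μ :=
    integral_congr_ae (Filter.Eventually.of_forall fun x => habs (f x))
  have e2 : ∫ x, |g x| ^ (2 : ℝ) ∂μ = ∫ x, g x ^ 2 ∂μ :=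
    integral_congr_ae (Filter.Eventually.of_forall fun x => habs (g x))
  calc |∫ x, f x * g x ∂μ| ≤ ∫ x, |f x| * |g x| ∂μ := by
        simpa [Real.norm_eq_abs, abs_mul] using
          norm_integral_le_integral_norm (f := fun x => f x * g x) (μ := μ)
    _ ≤ (∫ x, |f x| ^ (2:ℝ) ∂μ) ^ ((1:ℝ)/2) * (∫ x, |g x| ^ (2:ℝ) ∂μ) ^ ((1:ℝ)/2) := hH
    _ = Real.sqrt (∫ x, f x ^ 2 ∂μ) * Real.sqrt (∫ x, g x ^ 2 ∂μ) := by
        rw [e1, e2, Real.sqrt_eq_rpow, Real.sqrt_eq_rpow]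

/-- Lemma 4.3 of Wang et al. 2024. Let `p` and `q` be probability
densities (w.r.t. a dominating measure `μ`) of distributions over a random variable with
values in `[0,1]`, with means `p̄, q̄`. Then
`|p̄ − q̄| ≤ 8 √(Var(p) · D_H²(p,q)) + 20 D_H²(p,q)`,
where `D_H²(p,q) = (1/2)∫(√p − √q)² dμ` and `Var(p)` is the variance under `p`. -/
theorem mean_diff_le_second_order_hellinger
    (μ : Measure ℝ) (p q : ℝ → ℝ)
    (hpm : Measurable p) (hqm : Measurable q)
    (hp0 : ∀ x, 0 ≤ p x) (hq0 : ∀ x, 0 ≤ q x)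
    (hp1 : ∫ x, p x ∂μ = 1) (hq1 : ∫ x, q x ∂μ = 1)
    (hpsupp : ∀ x, x ∉ Set.Icc (0:ℝ) 1 → p x = 0)
    (hqsupp : ∀ x, x ∉ Set.Icc (0:ℝ) 1 → q x = 0)
    (hIp : Integrable (fun x => x * p x) μ) (hIq : Integrable (fun x => x * q x) μ)
    (hIvar : Integrable (fun x => (x - ∫ y, y * p y ∂μ) ^ 2 * p x) μ)
    (hIH : Integrable (fun x => (sqrt (p x) - sqrt (q x)) ^ 2) μ) :
    |(∫ x, x * p x ∂μ) - ∫ x, x * q x ∂μ|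
      ≤ 8 * sqrt ((∫ x, (x - ∫ y, y * p y ∂μ) ^ 2 * p x ∂μ) *
            ((1 / 2) * ∫ x, (sqrt (p x) - sqrt (q x)) ^ 2 ∂μ))
        + 20 * ((1 / 2) * ∫ x, (sqrt (p x) - sqrt (q x)) ^ 2 ∂μ) := by
  set m : ℝ := ∫ y, y * p y ∂μ with hm
  set V : ℝ := ∫ x, (x - m) ^ 2 * p x ∂μ with hVdef
  set S : ℝ := ∫ x, (sqrt (p x) - sqrt (q x)) ^ 2 ∂μ with hSdef
  -- integrability of p and q (else their integrals would be 0, not 1)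
  have hPint : Integrable p μ := by
    by_contra h
    rw [integral_undef h] at hp1; norm_num at hp1
  have hQint : Integrable q μ := by
    by_contra h
    rw [integral_undef h] at hq1; norm_num at hq1
  -- 0 ≤ m ≤ 1
  have hm0 : 0 ≤ m := by
    apply integral_nonneg
    intro x
    by_cases hx : x ∈ Set.Icc (0:ℝ) 1
    · exact mul_nonneg hx.1 (hp0 x)
    · simp [hpsupp x hx]
  have hm1 : m ≤ 1 := by
    rw [← hp1]
    apply integral_mono hIp hPint
    intro x
    by_cases hx : x ∈ Set.Icc (0:ℝ) 1
    · calc x * p x ≤ 1 * p x := mul_le_mul_of_nonneg_right hx.2 (hp0 x)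
        _ = p x := one_mul _
    · simp [hpsupp x hx, hp0 x]
  have hV0 : 0 ≤ V := integral_nonneg fun x => mul_nonneg (sq_nonneg _) (hp0 x)
  have hS0 : 0 ≤ S := integral_nonneg fun x => sq_nonneg _
  -- pointwise bound for (x-m)^2 * q x
  have hqpt : ∀ x, (x - m) ^ 2 * q x
      ≤ 2 * ((x - m) ^ 2 * p x) + 2 * (sqrt (p x) - sqrt (q x)) ^ 2 := by
    intro x
    by_cases hx : x ∈ Set.Icc (0:ℝ) 1
    · have hxm : (x - m) ^ 2 ≤ 1 := by nlinarith [hx.1, hx.2, hm0, hm1]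
      have hq' : sqrt (q x) ^ 2 = q x := Real.sq_sqrt (hq0 x)
      have hp' : sqrt (p x) ^ 2 = p x := Real.sq_sqrt (hp0 x)
      have key : (sqrt (q x)) ^ 2 ≤ 2 * (sqrt (p x)) ^ 2 + 2 * (sqrt (p x) - sqrt (q x)) ^ 2 := by
        nlinarith [sq_nonneg (2 * sqrt (p x) - sqrt (q x))]
      have A : (x - m) ^ 2 * (sqrt (q x)) ^ 2
          ≤ (x - m) ^ 2 * (2 * (sqrt (p x)) ^ 2 + 2 * (sqrt (p x) - sqrt (q x)) ^ 2) :=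
        mul_le_mul_of_nonneg_left key (sq_nonneg _)
      have B : (x - m) ^ 2 * (2 * (sqrt (p x) - sqrt (q x)) ^ 2)
          ≤ 2 * (sqrt (p x) - sqrt (q x)) ^ 2 := by
        nlinarith [sq_nonneg (sqrt (p x) - sqrt (q x)), hxm, sq_nonneg (x - m)]
      have hq2 : (x - m) ^ 2 * q x = (x - m) ^ 2 * (sqrt (q x)) ^ 2 := by rw [hq']
      have hp2 : (x - m) ^ 2 * p x = (x - m) ^ 2 * (sqrt (p x)) ^ 2 := by rw [hp']
      linarith [A, B, hq2, hp2]
    · rw [hqsupp x hx]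
      have h1 := mul_nonneg (sq_nonneg (x - m)) (hp0 x)
      nlinarith [sq_nonneg (sqrt (p x) - sqrt (q x))]
  -- integrability of (x-m)^2 * q x and bound on its integral
  have hbd : Integrable
      (fun x => 2 * ((x - m) ^ 2 * p x) + 2 * (sqrt (p x) - sqrt (q x)) ^ 2) μ :=
    (hIvar.const_mul 2).add (hIH.const_mul 2)
  have hQvar : Integrable (fun x => (x - m) ^ 2 * q x) μ := by
    refine Integrable.mono' hbd
      ((((measurable_id.sub_const m).pow_const 2).mul hqm).aestronglyMeasurable)
      (Filter.Eventually.of_forall fun x => ?_)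
    rw [Real.norm_eq_abs, abs_of_nonneg (mul_nonneg (sq_nonneg _) (hq0 x))]
    exact hqpt x
  have hQVle : ∫ x, (x - m) ^ 2 * q x ∂μ ≤ 2 * V + 2 * S := by
    calc ∫ x, (x - m) ^ 2 * q x ∂μ
        ≤ ∫ x, 2 * ((x - m) ^ 2 * p x) + 2 * (sqrt (p x) - sqrt (q x)) ^ 2 ∂μ :=
          integral_mono hQvar hbd hqpt
      _ = 2 * V + 2 * S := by
          rw [integral_add (hIvar.const_mul 2) (hIH.const_mul 2),
            integral_const_mul, integral_const_mul]
  -- the two Cauchy–Schwarz factors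
  set f : ℝ → ℝ := fun x => (x - m) * (sqrt (p x) + sqrt (q x)) with hfdef
  set g : ℝ → ℝ := fun x => sqrt (p x) - sqrt (q x) with hgdef
  have hspm : Measurable fun x => sqrt (p x) := Real.continuous_sqrt.measurable.comp hpm
  have hsqm : Measurable fun x => sqrt (q x) := Real.continuous_sqrt.measurable.comp hqm
  have hfm : Measurable f := (measurable_id.sub_const m).mul (hspm.add hsqm)
  have hgm : Measurable g := hspm.sub hsqm
  -- pointwise bound on f^2
  have hfpt : ∀ x, f x ^ 2 ≤ 2 * ((x - m) ^ 2 * p x) + 2 * ((x - m) ^ 2 * q x) := by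
    intro x
    have hp' : sqrt (p x) ^ 2 = p x := Real.sq_sqrt (hp0 x)
    have hq' : sqrt (q x) ^ 2 = q x := Real.sq_sqrt (hq0 x)
    have h := mul_nonneg (sq_nonneg (x - m)) (sq_nonneg (sqrt (p x) - sqrt (q x)))
    simp only [hfdef]
    nlinarith [h, hp', hq']
  have hbd2 : Integrable
      (fun x => 2 * ((x - m) ^ 2 * p x) + 2 * ((x - m) ^ 2 * q x)) μ :=
    (hIvar.const_mul 2).add (hQvar.const_mul 2)
  have hf2 : Integrable (fun x => f x ^ 2) μ := by
    refine Integrable.mono' hbd2 ((hfm.pow_const 2).aestronglyMeasurable)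
      (Filter.Eventually.of_forall fun x => ?_)
    rw [Real.norm_eq_abs, abs_of_nonneg (sq_nonneg _)]
    exact hfpt x
  have hg2 : Integrable (fun x => g x ^ 2) μ := hIH
  have hf2le : ∫ x, f x ^ 2 ∂μ ≤ 6 * V + 4 * S := by
    calc ∫ x, f x ^ 2 ∂μ
        ≤ ∫ x, 2 * ((x - m) ^ 2 * p x) + 2 * ((x - m) ^ 2 * q x) ∂μ :=
          integral_mono hf2 hbd2 hfpt
      _ = 2 * V + 2 * ∫ x, (x - m) ^ 2 * q x ∂μ := by
          rw [integral_add (hIvar.const_mul 2) (hQvar.const_mul 2),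
            integral_const_mul, integral_const_mul]
      _ ≤ 2 * V + 2 * (2 * V + 2 * S) := by linarith
      _ = 6 * V + 4 * S := by ring
  -- the mean difference equals ∫ f * g
  have hid : ∀ x, f x * g x = (x - m) * p x - (x - m) * q x := by
    intro x
    have h1 : f x * g x = (x - m) * (sqrt (p x) ^ 2 - sqrt (q x) ^ 2) := by
      simp only [hfdef, hgdef]; ring
    rw [h1, Real.sq_sqrt (hp0 x), Real.sq_sqrt (hq0 x)]; ring
  have hIpm : Integrable (fun x => (x - m) * p x) μ := by
    have h : (fun x => (x - m) * p x) = fun x => x * p x - m * p x :=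
      funext fun x => by ring
    exact h ▸ (hIp.sub (hPint.const_mul m))
  have hIqm : Integrable (fun x => (x - m) * q x) μ := by
    have h : (fun x => (x - m) * q x) = fun x => x * q x - m * q x :=
      funext fun x => by ring
    exact h ▸ (hIq.sub (hQint.const_mul m))
  have hfg_int : Integrable (fun x => f x * g x) μ := by
    have h : (fun x => f x * g x) = fun x => (x - m) * p x - (x - m) * q x := funext hid
    exact h ▸ (hIpm.sub hIqm)
  have hdiff : (∫ x, x * p x ∂μ) - ∫ x, x * q x ∂μ = ∫ x, f x * g x ∂μ := by
    have e0 : ∫ x, f x * g x ∂μ = ∫ x, ((x - m) * p x - (x - m) * q x) ∂μ :=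
      integral_congr_ae (Filter.Eventually.of_forall hid)
    have e1 : ∫ x, (x - m) * p x ∂μ = (∫ x, x * p x ∂μ) - m := by
      have h : (fun x => (x - m) * p x) = fun x => x * p x - m * p x :=
        funext fun x => by ring
      rw [h, integral_sub hIp (hPint.const_mul m), integral_const_mul, hp1, mul_one]
    have e2 : ∫ x, (x - m) * q x ∂μ = (∫ x, x * q x ∂μ) - m := by
      have h : (fun x => (x - m) * q x) = fun x => x * q x - m * q x :=
        funext fun x => by ring
      rw [h, integral_sub hIq (hQint.const_mul m), integral_const_mul, hq1, mul_one]
    rw [e0, integral_sub hIpm hIqm, e1, e2]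
    ring
  -- Cauchy–Schwarz
  have hCS : |∫ x, f x * g x ∂μ| ≤ sqrt (∫ x, f x ^ 2 ∂μ) * sqrt S :=
    cs_integral hfm.aestronglyMeasurable hgm.aestronglyMeasurable hf2 hg2
  -- final arithmetic
  have hA : sqrt (∫ x, f x ^ 2 ∂μ) ≤ sqrt (6 * V + 4 * S) := Real.sqrt_le_sqrt hf2le
  have hB : sqrt (∫ x, f x ^ 2 ∂μ) * sqrt S ≤ sqrt ((6 * V + 4 * S) * S) := by
    rw [Real.sqrt_mul (by linarith)]
    exact mul_le_mul_of_nonneg_right hA (Real.sqrt_nonneg _)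
  have hkey : sqrt ((6 * V + 4 * S) * S) ≤ 8 * sqrt (V * ((1 / 2) * S)) + 10 * S := by
    have hVS0 : 0 ≤ V * ((1 / 2) * S) := by positivity
    have hs : sqrt (V * ((1 / 2) * S)) ^ 2 = V * ((1 / 2) * S) := Real.sq_sqrt hVS0
    have h1 : (6 * V + 4 * S) * S ≤ (8 * sqrt (V * ((1 / 2) * S)) + 10 * S) ^ 2 := by
      nlinarith [hs, Real.sqrt_nonneg (V * ((1 / 2) * S)), mul_nonneg hV0 hS0,
        mul_nonneg (Real.sqrt_nonneg (V * ((1 / 2) * S))) hS0, sq_nonneg S]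
    calc sqrt ((6 * V + 4 * S) * S)
        ≤ sqrt ((8 * sqrt (V * ((1 / 2) * S)) + 10 * S) ^ 2) := Real.sqrt_le_sqrt h1
      _ = 8 * sqrt (V * ((1 / 2) * S)) + 10 * S := Real.sqrt_sq (by positivity)
  rw [hdiff]
  calc |∫ x, f x * g x ∂μ| ≤ sqrt (∫ x, f x ^ 2 ∂μ) * sqrt S := hCS
    _ ≤ sqrt ((6 * V + 4 * S) * S) := hB
    _ ≤ 8 * sqrt (V * ((1 / 2) * S)) + 10 * S := hkey
    _ ≤ 8 * sqrt (V * ((1 / 2) * S)) + 20 * ((1 / 2) * S) := by linarith
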